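/- For all real x > 0, θ₁(x+1) - θ₁(x) < 0, i.e., x(log x - ψ(x)) is strictly larger than (x+1)(log(x+1) - ψ(x+1)). -/

import Mathlib

open Real Filter Set

/-- The digamma function ψ(x) = Γ′(x)/Γ(x). -/
noncomputable def digamma (x : ℝ) : ℝ := deriv Real.Gamma x / Real.Gamma x

private lemma aux_w_pos {t : ℝ} (ht : t ∈ Set.Ioo (0:ℝ) 1) :
    2 * t < Real.log (1 + t) - Real.log (1 - t) := by
  set w : ℝ → ℝ := fun s => Real.log (1 + s) - Real.log (1 - s) - 2 * s with hw
  have hder : ∀ s ∈ Set.Ico (0:ℝ) 1, HasDerivAt w (1/(1+s) + 1/(1-s) - 2) s := by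
    intro s hs
    have h1 : (0:ℝ) < 1 + s := by linarith [hs.1]
    have h2 : (0:ℝ) < 1 - s := by linarith [hs.2]
    have d1 : HasDerivAt (fun s : ℝ => Real.log (1 + s)) (1/(1+s)) s := by
      simpa using ((hasDerivAt_id s).const_add 1).log h1.ne'
    have d2 : HasDerivAt (fun s : ℝ => Real.log (1 - s)) (-1/(1-s)) s := by
      have : HasDerivAt (fun s : ℝ => 1 - s) (-1) s := by
        simpa using (hasDerivAt_id s).const_sub 1
      simpa using this.log h2.ne'
    have d3 : HasDerivAt (fun s : ℝ => 2 * s) 2 s := by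
      simpa using (hasDerivAt_id s).const_mul 2
    have := (d1.sub d2).sub d3
    convert this using 1
    all_goals first | rfl | ring
  have hmono : StrictMonoOn w (Set.Ico (0:ℝ) 1) := by
    apply strictMonoOn_of_deriv_pos (convex_Ico 0 1)
    · exact fun s hs => (hder s hs).continuousAt.continuousWithinAt
    · intro s hs
      rw [interior_Ico] at hs
      rw [(hder s ⟨hs.1.le, hs.2⟩).deriv]
      have h1 : (0:ℝ) < 1 + s := by linarith [hs.1]
      have h2 : (0:ℝ) < 1 - s := by linarith [hs.2]
      have key : 1/(1+s) + 1/(1-s) - 2 = 2*s^2/((1+s)*(1-s)) := by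
        field_simp; ring
      rw [key]
      exact div_pos (by nlinarith [hs.1]) (by nlinarith)
  have h0 : w 0 = 0 := by simp [hw]
  have := hmono (Set.mem_Ico.2 ⟨le_refl 0, one_pos⟩) (Set.mem_Ico.2 ⟨ht.1.le, ht.2⟩) ht.1
  rw [h0] at this
  simp only [hw] at this
  linarith

private lemma aux_phi_pos {t : ℝ} (ht : t ∈ Set.Ioo (0:ℝ) 1) :
    t^2 < (1+t) * Real.log (1+t) + (1-t) * Real.log (1-t) := by
  set φ : ℝ → ℝ := fun s => (1+s) * Real.log (1+s) + (1-s) * Real.log (1-s) - s^2 with hφ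
  have hder : ∀ s ∈ Set.Ico (0:ℝ) 1,
      HasDerivAt φ (Real.log (1+s) - Real.log (1-s) - 2*s) s := by
    intro s hs
    have h1 : (0:ℝ) < 1 + s := by linarith [hs.1]
    have h2 : (0:ℝ) < 1 - s := by linarith [hs.2]
    have da : HasDerivAt (fun s : ℝ => 1 + s) 1 s := by
      simpa using (hasDerivAt_id s).const_add 1
    have db : HasDerivAt (fun s : ℝ => 1 - s) (-1) s := by
      simpa using (hasDerivAt_id s).const_sub 1
    have d1 : HasDerivAt (fun s : ℝ => (1+s) * Real.log (1+s))
        (1 * Real.log (1+s) + (1+s) * (1/(1+s))) s :=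
      da.mul (by simpa using da.log h1.ne')
    have d2 : HasDerivAt (fun s : ℝ => (1-s) * Real.log (1-s))
        ((-1) * Real.log (1-s) + (1-s) * (-1/(1-s))) s :=
      db.mul (by simpa using db.log h2.ne')
    have d3 : HasDerivAt (fun s : ℝ => s^2) (2*s) s := by
      simpa using hasDerivAt_pow 2 s
    have := (d1.add d2).sub d3
    convert this using 1
    all_goals first | rfl | (field_simp; ring)
  have hmono : StrictMonoOn φ (Set.Ico (0:ℝ) 1) := by
    apply strictMonoOn_of_deriv_pos (convex_Ico 0 1)
    · exact fun s hs => (hder s hs).continuousAt.continuousWithinAt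
    · intro s hs
      rw [interior_Ico] at hs
      rw [(hder s ⟨hs.1.le, hs.2⟩).deriv]
      linarith [aux_w_pos hs]
  have h0 : φ 0 = 0 := by simp [hφ]
  have := hmono (Set.mem_Ico.2 ⟨le_refl 0, one_pos⟩) (Set.mem_Ico.2 ⟨ht.1.le, ht.2⟩) ht.1
  rw [h0] at this
  simp only [hφ] at this
  linarith

private lemma aux_key {y : ℝ} (hy : 0 < y) :
    1/(y+1) < (y+2) * Real.log (y+2) - 2 * ((y+1) * Real.log (y+1)) + y * Real.log y := by
  set t : ℝ := 1/(y+1) with htdef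
  have hy1 : (0:ℝ) < y + 1 := by linarith
  have ht : (y+1) * t = 1 := by rw [htdef]; field_simp
  have ht0 : 0 < t := by positivity
  have ht1 : t < 1 := by
    rw [htdef, div_lt_one hy1]; linarith
  have h1t : (0:ℝ) < 1 + t := by linarith
  have h1t' : (0:ℝ) < 1 - t := by linarith
  have e2 : y + 2 = (y+1) * (1+t) := by
    rw [htdef]; field_simp; ring
  have e0 : y = (y+1) * (1-t) := by
    rw [htdef]; field_simp; ring
  have l2 : Real.log (y+2) = Real.log (y+1) + Real.log (1+t) := by
    rw [e2, Real.log_mul hy1.ne' h1t.ne']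
  have l0 : Real.log y = Real.log (y+1) + Real.log (1-t) := by
    conv_lhs => rw [e0]
    rw [Real.log_mul hy1.ne' h1t'.ne']
  have expand : (y+2) * Real.log (y+2) - 2 * ((y+1) * Real.log (y+1)) + y * Real.log y
      = (y+1) * ((1+t) * Real.log (1+t) + (1-t) * Real.log (1-t)) := by
    rw [l2, l0]
    linear_combination (-(Real.log (1+t)) + Real.log (1-t)) * ht
  rw [expand]
  have hphi := aux_phi_pos (Set.mem_Ioo.2 ⟨ht0, ht1⟩)
  have := mul_lt_mul_of_pos_left hphi hy1
  have htsq : (y+1) * t^2 = t := by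
    rw [pow_two, ← mul_assoc, ht, one_mul]
  linarith [this, htsq.symm ▸ this]

private lemma gamma_diff {y : ℝ} (hy : 0 < y) : DifferentiableAt ℝ Real.Gamma y :=
  Real.differentiableAt_Gamma fun m => ((neg_nonpos.mpr m.cast_nonneg).trans_lt hy).ne'

private lemma digamma_eq {y : ℝ} (hy : 0 < y) :
    digamma y = deriv (Real.log ∘ Real.Gamma) y := by
  rw [digamma, Function.comp_def,
    deriv.log (gamma_diff hy) (Real.Gamma_pos_of_pos hy).ne']

private lemma logGamma_rec {y : ℝ} (hy : 0 < y) :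
    (Real.log ∘ Real.Gamma) (y + 1) = (Real.log ∘ Real.Gamma) y + Real.log y := by
  simp only [Function.comp_apply, Real.Gamma_add_one hy.ne',
    Real.log_mul hy.ne' (Real.Gamma_pos_of_pos hy).ne', add_comm]

private lemma logGamma_diff {y : ℝ} (hy : 0 < y) :
    DifferentiableAt ℝ (Real.log ∘ Real.Gamma) y :=
  (gamma_diff hy).log (Real.Gamma_pos_of_pos hy).ne'

private lemma digamma_rec {y : ℝ} (hy : 0 < y) :
    digamma (y + 1) = digamma y + 1 / y := by
  rw [digamma_eq (by linarith : (0:ℝ) < y + 1), digamma_eq hy]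
  rw [← deriv_comp_add_const, one_div, ← Real.deriv_log,
    ← deriv_add (logGamma_diff hy) (Real.differentiableAt_log hy.ne')]
  apply Filter.EventuallyEq.deriv_eq
  filter_upwards [eventually_gt_nhds hy] using fun z hz => logGamma_rec hz

private lemma digamma_lb {y : ℝ} (hy : 0 < y) : Real.log y ≤ digamma (y + 1) := by
  rw [digamma_eq (by linarith : (0:ℝ) < y + 1)]
  have h := Real.convexOn_log_Gamma.slope_le_deriv (Set.mem_Ioi.2 hy)
    (Set.mem_Ioi.2 (by linarith : (0:ℝ) < y + 1)) (by linarith)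
    (logGamma_diff (by linarith : (0:ℝ) < y + 1))
  refine le_trans (le_of_eq ?_) h
  rw [slope_def_field, logGamma_rec hy]
  field_simp; ring

private lemma digamma_ub {y : ℝ} (hy : 0 < y) : digamma (y + 1) ≤ Real.log (y + 1) := by
  rw [digamma_eq (by linarith : (0:ℝ) < y + 1)]
  have h := Real.convexOn_log_Gamma.deriv_le_slope
    (Set.mem_Ioi.2 (by linarith : (0:ℝ) < y + 1))
    (Set.mem_Ioi.2 (by linarith : (0:ℝ) < y + 2)) (by linarith)
    (logGamma_diff (by linarith : (0:ℝ) < y + 1))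
  refine le_trans h (le_of_eq ?_)
  rw [slope_def_field, show y + 2 = (y + 1) + 1 by ring,
    logGamma_rec (by linarith : (0:ℝ) < y + 1)]
  field_simp; ring

noncomputable def thetaF (y : ℝ) : ℝ :=
  digamma (y + 1) - ((y + 1) * Real.log (y + 1) - y * Real.log y) + 1

private lemma thetaF_step {y : ℝ} (hy : 0 < y) : thetaF (y + 1) < thetaF y := by
  have hrec : digamma (y + 1 + 1) = digamma (y + 1) + 1 / (y + 1) :=
    digamma_rec (by linarith)
  have hkey := aux_key hy
  simp only [thetaF]
  rw [hrec]
  have : y + 1 + 1 = y + 2 := by ring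
  rw [this]
  linarith

private lemma thetaF_lb {y : ℝ} (hy : 0 < y) :
    1 - (y + 1) * (Real.log (y + 1) - Real.log y) ≤ thetaF y := by
  have h := digamma_lb hy
  have e : (y + 1) * Real.log y = y * Real.log y + Real.log y := by ring
  simp only [thetaF]
  nlinarith [h]

private lemma thetaF_ub {y : ℝ} (hy : 0 < y) :
    thetaF y ≤ 1 - y * (Real.log (y + 1) - Real.log y) := by
  have h := digamma_ub hy
  simp only [thetaF]
  nlinarith [h]

private lemma log_ratio_eq {y : ℝ} (hy : 0 < y) :
    Real.log (y + 1) - Real.log y = Real.log (1 + 1 / y) := by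
  rw [← Real.log_div (by linarith) hy.ne']
  congr 1
  field_simp

private lemma tendsto_mul_ratio : Filter.Tendsto
    (fun y : ℝ => y * (Real.log (y + 1) - Real.log y)) Filter.atTop (nhds 1) := by
  have h := Real.tendsto_mul_log_one_add_div_atTop 1
  apply h.congr'
  filter_upwards [Filter.eventually_gt_atTop (0:ℝ)] with y hy
  rw [log_ratio_eq hy, one_div]

private lemma tendsto_ratio : Filter.Tendsto
    (fun y : ℝ => Real.log (y + 1) - Real.log y) Filter.atTop (nhds 0) := by
  have h1 : Filter.Tendsto (fun y : ℝ => 1 + 1 / y) Filter.atTop (nhds 1) := by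
    have := tendsto_inv_atTop_zero (𝕜 := ℝ)
    have h := tendsto_const_nhds (x := (1:ℝ)) (f := Filter.atTop).add this
    simpa [one_div] using h
  have h2 := (Real.continuousAt_log one_ne_zero).tendsto.comp h1
  rw [Real.log_one] at h2
  apply h2.congr'
  filter_upwards [Filter.eventually_gt_atTop (0:ℝ)] with y hy
  rw [Function.comp_apply, ← log_ratio_eq hy]

private lemma tendsto_A : Filter.Tendsto
    (fun y : ℝ => 1 - (y + 1) * (Real.log (y + 1) - Real.log y)) Filter.atTop (nhds 0) := by
  have h : Filter.Tendsto
      (fun y : ℝ => 1 - (y * (Real.log (y + 1) - Real.log y)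
        + (Real.log (y + 1) - Real.log y))) Filter.atTop (nhds (1 - (1 + 0))) :=
    tendsto_const_nhds.sub (tendsto_mul_ratio.add tendsto_ratio)
  norm_num at h
  apply h.congr
  intro y; ring

private lemma tendsto_B : Filter.Tendsto
    (fun y : ℝ => 1 - y * (Real.log (y + 1) - Real.log y)) Filter.atTop (nhds 0) := by
  have h : Filter.Tendsto
      (fun y : ℝ => 1 - y * (Real.log (y + 1) - Real.log y)) Filter.atTop (nhds (1 - 1)) :=
    tendsto_const_nhds.sub tendsto_mul_ratio
  norm_num at h
  exact h

theorem theta_diff_neg (x : ℝ) (hx : 0 < x) :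
    (x + 1) * (Real.log (x + 1) - digamma (x + 1)) - x * (Real.log x - digamma x) < 0 := by
  have hxseq : Filter.Tendsto (fun n : ℕ => x + 1 + (n : ℝ)) Filter.atTop Filter.atTop :=
    Filter.tendsto_atTop_add_const_left _ _ tendsto_natCast_atTop_atTop
  have hpos : ∀ n : ℕ, (0:ℝ) < x + 1 + n := fun n => by positivity
  have htend : Filter.Tendsto (fun n : ℕ => thetaF (x + 1 + n)) Filter.atTop (nhds 0) := by
    apply tendsto_of_tendsto_of_tendsto_of_le_of_le
      (tendsto_A.comp hxseq) (tendsto_B.comp hxseq)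
    · exact fun n => thetaF_lb (hpos n)
    · exact fun n => thetaF_ub (hpos n)
  have hchain : ∀ n : ℕ, thetaF (x + 1 + n) ≤ thetaF (x + 1) := by
    intro n
    induction n with
    | zero => simp
    | succ k ih =>
      have hstep := thetaF_step (hpos k)
      have e : x + 1 + (k:ℝ) + 1 = x + 1 + ((k:ℕ) + 1 : ℕ) := by push_cast; ring
      rw [e] at hstep
      exact le_trans hstep.le ih
  have hF1 : 0 ≤ thetaF (x + 1) := le_of_tendsto htend (Filter.Eventually.of_forall hchain)
  have hFx : 0 < thetaF x := lt_of_le_of_lt hF1 (thetaF_step hx)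
  have hrec := digamma_rec hx
  have hinv : x * (1 / x) = 1 := by field_simp
  simp only [thetaF] at hFx
  rw [hrec] at hFx ⊢
  nlinarith [hFx, hinv]
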